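/- arXiv:2002.10238 — 11 statements merged into one kernel-verified Lean document; each statement's English description precedes it below -/
import Mathlib

section
/- Let $(A,\cdot,\ast)$ be an F-manifold-admissible algebra, i.e., $(A,\cdot)$ is commutative associative, $(A,\ast)$ is Lie-admissible, and $x\ast(y\cdot z) - (x\ast y)\cdot z - y\cdot(x\ast z) = y\ast(x\cdot z) - (y\ast x)\cdot z - x\cdot(y\ast z)$ for all $x,y,z$. Then $(A,\cdot,[-,-])$ with $[x,y] = x\ast y - y\ast x$ is an F-manifold algebra. -/
namespace FMan
variable {A : Type*} [AddCommGroup A]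

/-- The Hertling-Manin operator `P_x(y,z) = [x, y·z] - [x,y]·z - y·[x,z]`. -/
def P (mul br : A → A → A) (x y z : A) : A :=
  br x (mul y z) - mul (br x y) z - mul y (br x z)

/-- `(A, mul, br)` is an F-manifold algebra: `mul` is commutative associative,
`br` is a Lie bracket, and the Hertling-Manin relation holds. -/
def IsFManifold (mul br : A → A → A) : Prop :=
  (∀ x y, mul x y = mul y x) ∧
  (∀ x y z, mul (mul x y) z = mul x (mul y z)) ∧
  (∀ x y, br x y = - br y x) ∧
  (∀ x y z, br x (br y z) + br y (br z x) + br z (br x y) = 0) ∧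
  (∀ x y z w, P mul br (mul x y) z w =
      mul x (P mul br y z w) + mul y (P mul br x z w))

/-- `F₁(x,y,z) = x∗(y⋄z) - y⋄(x∗z) - [x,y]⋄z`. -/
def F1 (d s : A → A → A) (x y z : A) : A :=
  s x (d y z) - d y (s x z) - d (s x y - s y x) z

/-- `F₂(x,y,z) = x⋄(y∗z) + y⋄(x∗z) - (x·y)∗z`. -/
def F2 (d s : A → A → A) (x y z : A) : A :=
  d x (s y z) + d y (s x z) - s (d x y + d y x) z

/-- `(A, ⋄, ∗)` is a pre-F-manifold algebra: `⋄` Zinbiel, `∗` pre-Lie, plus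
the two compatibility conditions. -/
def IsPreFManifold (d s : A → A → A) : Prop :=
  (∀ x y z, d x (d y z) = d (d y x) z + d (d x y) z) ∧
  (∀ x y z, s (s x y) z - s x (s y z) = s (s y x) z - s y (s x z)) ∧
  (∀ x y z w, F1 d s (d x y + d y x) z w = d x (F1 d s y z w) + d y (F1 d s x z w)) ∧
  (∀ x y z w, d (F1 d s x y z + F1 d s x z y + F2 d s y z x) w =
      F2 d s y z (d x w) - d x (F2 d s y z w))

/-- `G₁(x,y,z) = {x, y•z} - {x,y}•z - y•{x,z}`. -/
def G1 (bl lb : A → A → A) (x y z : A) : A :=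
  lb x (bl y z) - bl (lb x y) z - bl y (lb x z)

/-- `G₂(x,y,z) = {y•z, x} - z•{y,x} - y•{z,x}`. -/
def G2 (bl lb : A → A → A) (x y z : A) : A :=
  lb (bl y z) x - bl z (lb y x) - bl y (lb z x)

/-- `(A, •, {-,-})` is a dual pre-F-manifold algebra: `•` permutative,
`{-,-}` Leibniz, plus three compatibility conditions. -/
def IsDualPreFManifold (bl lb : A → A → A) : Prop :=
  (∀ x y z, bl x (bl y z) = bl (bl x y) z) ∧
  (∀ x y z, bl (bl x y) z = bl (bl y x) z) ∧
  (∀ x y z, lb x (lb y z) = lb (lb x y) z + lb y (lb x z)) ∧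
  (∀ x y z w, G1 bl lb (bl x y) z w = bl x (G1 bl lb y z w) + bl y (G1 bl lb x z w)) ∧
  (∀ x y z w, G2 bl lb (bl y x) z w = bl y (G2 bl lb x z w) - bl (G1 bl lb y z w) x) ∧
  (∀ x y z, bl (lb x y) z + bl (lb y x) z = 0)

end FMan

open FMan

section Aux
variable {K A : Type*} [Field K] [AddCommGroup A] [Module K A]

private def Dop (m s : A →ₗ[K] A →ₗ[K] A) (a b c : A) : A :=
  s a (m b c) - m (s a b) c - m b (s a c)

private lemma dec (m s : A →ₗ[K] A →ₗ[K] A) (a b c : A) :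
    s a (m b c) = m (s a b) c + m b (s a c) + Dop m s a b c := by
  unfold Dop; abel

private lemma hD (m s : A →ₗ[K] A →ₗ[K] A)
    (hadm : ∀ x y z : A,
      s x (m y z) - m (s x y) z - m y (s x z) =
      s y (m x z) - m (s y x) z - m x (s y z))
    (a b c : A) : Dop m s a b c = Dop m s b a c := by
  unfold Dop; exact hadm a b c

private lemma hlc (m : A →ₗ[K] A →ₗ[K] A)
    (hcomm : ∀ x y : A, m x y = m y x)
    (hassoc : ∀ x y z : A, m (m x y) z = m x (m y z))
    (a b c : A) : m a (m b c) = m b (m a c) := by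
  rw [← hassoc, hcomm a b, hassoc]

private lemma prodD (m s : A →ₗ[K] A →ₗ[K] A)
    (hcomm : ∀ x y : A, m x y = m y x)
    (hassoc : ∀ x y z : A, m (m x y) z = m x (m y z))
    (hadm : ∀ x y z : A,
      s x (m y z) - m (s x y) z - m y (s x z) =
      s y (m x z) - m (s y x) z - m x (s y z))
    (a b c d : A) :
    Dop m s (m a b) c d =
      m a (Dop m s c b d) + Dop m s c a (m b d) - m d (Dop m s c a b) := by
  rw [hD m s hadm (m a b) c d]
  unfold Dop
  rw [hassoc a b d]
  simp only [map_add, map_sub]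
  simp only [hcomm, hassoc, hlc m hcomm hassoc]
  abel

end Aux

/-- An F-manifold-admissible algebra gives an F-manifold algebra via the commutator bracket. -/
theorem FManifoldAdmissible_to_FManifold
    {K A : Type*} [Field K] [CharZero K] [AddCommGroup A] [Module K A]
    (m s : A →ₗ[K] A →ₗ[K] A)
    (hcomm : ∀ x y : A, m x y = m y x)
    (hassoc : ∀ x y z : A, m (m x y) z = m x (m y z))
    (hLieAdm : ∀ x y z : A,
      (s (s x y) z - s x (s y z)) - (s (s y x) z - s y (s x z))
      + (s (s y z) x - s y (s z x)) - (s (s z y) x - s z (s y x))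
      + (s (s z x) y - s z (s x y)) - (s (s x z) y - s x (s z y)) = 0)
    (hadm : ∀ x y z : A,
      s x (m y z) - m (s x y) z - m y (s x z) =
      s y (m x z) - m (s y x) z - m x (s y z)) :
    IsFManifold (fun x y => m x y) (fun x y => s x y - s y x) := by
  refine ⟨fun x y => hcomm x y, fun x y z => hassoc x y z, ?_, ?_, ?_⟩
  · intro x y
    show s x y - s y x = -(s y x - s x y)
    abel
  · intro x y z
    show (s x (s y z - s z y) - s (s y z - s z y) x)
        + (s y (s z x - s x z) - s (s z x - s x z) y)
        + (s z (s x y - s y x) - s (s x y - s y x) z) = 0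
    have h' := neg_eq_zero.mpr (hLieAdm x y z)
    simp only [map_sub, LinearMap.sub_apply]
    rw [← h']
    abel
  · intro x y z w
    have hPf : ∀ a b c : A,
        P (fun u v => m u v) (fun u v => s u v - s v u) a b c =
          s b (m a c) - s (m b c) a - m a (s b c) + m b (s c a) := by
      intro a b c
      show (s a (m b c) - s (m b c) a) - m (s a b - s b a) c - m b (s a c - s c a) =
        s b (m a c) - s (m b c) a - m a (s b c) + m b (s c a)
      have h' := sub_eq_zero.mpr (hadm a b c)
      simp only [map_sub, LinearMap.sub_apply]
      rw [← sub_eq_zero, ← h']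
      abel
    show P (fun u v => m u v) (fun u v => s u v - s v u) (m x y) z w =
        m x (P (fun u v => m u v) (fun u v => s u v - s v u) y z w)
        + m y (P (fun u v => m u v) (fun u v => s u v - s v u) x z w)
    rw [hPf (m x y) z w, hPf y z w, hPf x z w]
    simp only [map_add, map_sub]
    rw [dec m s z (m x y) w, dec m s (m z w) x y, dec m s w x y,
        dec m s z y w, dec m s z x w, dec m s z x y,
        hD m s hadm z (m x y) w,
        prodD m s hcomm hassoc hadm x y z w,
        prodD m s hcomm hassoc hadm z w x y]
    have e1 : Dop m s z x (m y w) = Dop m s x z (m w y) := by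
      rw [hD m s hadm, hcomm y w]
    have e2 : Dop m s x w y = Dop m s w x y := hD m s hadm x w y
    have e3 : Dop m s x z w = Dop m s z x w := hD m s hadm x z w
    rw [e1, e2, e3]
    unfold Dop
    simp only [map_add, map_sub, LinearMap.add_apply, LinearMap.sub_apply]
    simp only [hcomm, hassoc, hlc m hcomm hassoc]
    abel
end

section
/- Let $(A,\cdot,\ast)$ be a PreLie-Com algebra. Then $(A,\cdot,[-,-])$ is an F-manifold algebra, where $[x,y] = x\ast y - y\ast x$. -/
open FMan

/-- A PreLie-Com algebra gives an F-manifold algebra via the commutator bracket. -/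
theorem preLieCom_to_FManifold
    {K A : Type*} [Field K] [CharZero K] [AddCommGroup A] [Module K A]
    (m s : A →ₗ[K] A →ₗ[K] A)
    (hcomm : ∀ x y : A, m x y = m y x)
    (hassoc : ∀ x y z : A, m (m x y) z = m x (m y z))
    (hpre : ∀ x y z : A, s (s x y) z - s x (s y z) = s (s y x) z - s y (s x z))
    (hcompat : ∀ x y z : A, s x (m y z) - m (s x y) z - m y (s x z) = 0) :
    IsFManifold (fun x y => m x y) (fun x y => s x y - s y x) := by
  have hlcomm : ∀ x y z : A, m x (m y z) = m y (m x z) := fun x y z => by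
    rw [← hassoc, hcomm x y, hassoc]
  have der : ∀ a b c : A, s a (m b c) = m (s a b) c + m b (s a c) := by
    intro a b c
    have h := hcompat a b c
    rw [sub_sub, sub_eq_zero] at h
    exact h
  refine ⟨hcomm, hassoc, fun x y => by beta_reduce; abel, ?_, ?_⟩
  · intro x y z
    simp only [map_sub, LinearMap.sub_apply]
    linear_combination (norm := abel1) -hpre x y z - hpre y z x - hpre z x y
  · intro x y z w
    simp only [P, der, map_sub, map_add, LinearMap.sub_apply, LinearMap.add_apply]
    simp only [hassoc, hlcomm, hcomm]
    abel
end

section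
/- Let $(A,\cdot)$ be a commutative associative algebra with a derivation $D$, and fix $a$ in the base field (or $a\in A$). Then the product $x\ast_a y = x\cdot D(y) + a\cdot x\cdot y$ makes $(A,\cdot,\ast_a)$ into an F-manifold-admissible algebra; consequently $(A,\cdot,[-,-])$ with $[x,y] = x\cdot D(y) - y\cdot D(x)$ is an F-manifold algebra. -/
open FMan

/-- A commutative associative algebra with a derivation `D` and a scalar `a` gives an
F-manifold-admissible algebra via `x ∗ₐ y = x·D(y) + a x·y`, and hence an F-manifold
algebra with bracket `[x,y] = x·D(y) - y·D(x)`. -/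
theorem derivation_gives_FManifoldAdmissible_and_FManifold
    {K A : Type*} [Field K] [CharZero K] [AddCommGroup A] [Module K A]
    (m : A →ₗ[K] A →ₗ[K] A) (D : A →ₗ[K] A) (a : K)
    (hcomm : ∀ x y : A, m x y = m y x)
    (hassoc : ∀ x y z : A, m (m x y) z = m x (m y z))
    (hder : ∀ x y : A, D (m x y) = m (D x) y + m x (D y)) :
    (∀ x y z : A,
      (let s : A → A → A := fun x y => m x (D y) + a • m x y
       (s (s x y) z - s x (s y z)) - (s (s y x) z - s y (s x z))
       + (s (s y z) x - s y (s z x)) - (s (s z y) x - s z (s y x))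
       + (s (s z x) y - s z (s x y)) - (s (s x z) y - s x (s z y))) = 0) ∧
    (∀ x y z : A,
      (let s : A → A → A := fun x y => m x (D y) + a • m x y
       s x (m y z) - m (s x y) z - m y (s x z)) =
      (let s : A → A → A := fun x y => m x (D y) + a • m x y
       s y (m x z) - m (s y x) z - m x (s y z))) ∧
    IsFManifold (fun x y => m x y) (fun x y => m x (D y) - m y (D x)) := by
  have mlcomm : ∀ x y z : A, m x (m y z) = m y (m x z) := by
    intro x y z
    rw [← hassoc, hcomm x y, hassoc]
  refine ⟨?_, ?_, hcomm, hassoc, ?_, ?_, ?_⟩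
  · intro x y z
    dsimp only
    simp only [map_add, map_sub, map_smul, LinearMap.add_apply, LinearMap.sub_apply,
      LinearMap.smul_apply, hder]
    simp only [hassoc, hcomm, mlcomm]
    abel_nf
  · intro x y z
    dsimp only
    simp only [map_add, map_sub, map_smul, LinearMap.add_apply, LinearMap.sub_apply,
      LinearMap.smul_apply, hder]
    simp only [hassoc, hcomm, mlcomm]
    abel_nf
  · intro x y
    exact (neg_sub _ _).symm
  · intro x y z
    simp only [map_add, map_sub, LinearMap.add_apply, LinearMap.sub_apply, hder]
    simp only [hassoc, hcomm, mlcomm]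
    abel_nf
  · intro x y z w
    simp only [P, map_add, map_sub, LinearMap.add_apply, LinearMap.sub_apply, hder]
    simp only [hassoc, hcomm, mlcomm]
    abel_nf
end

section
/- Let $(A,\cdot_A)$ be a commutative associative algebra and let $\cdot_\hbar$, determined by bilinear maps $\mu_n:A\times A\to A$ with $\mu_0 = \cdot_A$ via $x\cdot_\hbar y = \sum_{n\ge 0}\hbar^n\mu_n(x,y)$, be a pre-Lie product on $A[[\hbar]]$. Then $(A,\cdot_A,[-,-]_A)$ with $[x,y]_A = \mu_1(x,y) - \mu_1(y,x)$ is an F-manifold algebra. -/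
open FMan

/-- The semi-classical limit of a pre-Lie formal deformation of a commutative
associative algebra is an F-manifold algebra: if `μ : ℕ → bilinear maps` with
`μ 0` the given commutative associative product defines a pre-Lie product on
`A[[ℏ]]`, then `(A, μ 0, [x,y] = μ₁(x,y) - μ₁(y,x))` is an F-manifold algebra. -/
theorem preLie_deformation_semiclassical_limit
    {K A : Type*} [Field K] [CharZero K] [AddCommGroup A] [Module K A]
    (μ : ℕ → A →ₗ[K] A →ₗ[K] A)
    (hcomm : ∀ x y : A, μ 0 x y = μ 0 y x)
    (hpre : ∀ (k : ℕ) (x y z : A),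
      ∑ i ∈ Finset.range (k + 1), (μ i (μ (k - i) x y) z - μ i x (μ (k - i) y z)) =
      ∑ i ∈ Finset.range (k + 1), (μ i (μ (k - i) y x) z - μ i y (μ (k - i) x z))) :
    IsFManifold (fun x y => μ 0 x y) (fun x y => μ 1 x y - μ 1 y x) := by
  have h0 : ∀ a b c : A, μ 0 (μ 0 a b) c - μ 0 a (μ 0 b c) =
      μ 0 (μ 0 b a) c - μ 0 b (μ 0 a c) := by
    intro a b c
    have e := hpre 0 a b c
    norm_num [Finset.sum_range_succ] at e
    linear_combination (norm := abel) e
  have hswap : ∀ a b c : A, μ 0 a (μ 0 b c) = μ 0 b (μ 0 a c) := by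
    intro a b c
    linear_combination (norm := abel) - h0 a b c + congrArg (fun t => μ 0 t c) (hcomm a b)
  have hassoc : ∀ a b c : A, μ 0 (μ 0 a b) c = μ 0 a (μ 0 b c) := by
    intro a b c
    rw [hcomm (μ 0 a b) c, hswap c a b, hcomm c b]
  have h1 : ∀ a b c : A,
      μ 0 (μ 1 a b) c - μ 0 a (μ 1 b c) + (μ 1 (μ 0 a b) c - μ 1 a (μ 0 b c)) =
      μ 0 (μ 1 b a) c - μ 0 b (μ 1 a c) + (μ 1 (μ 0 b a) c - μ 1 b (μ 0 a c)) := by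
    intro a b c
    have e := hpre 1 a b c
    norm_num [Finset.sum_range_succ] at e
    linear_combination (norm := abel) e
  have h1m : ∀ l a b c : A,
      μ 0 l (μ 0 (μ 1 a b) c) - μ 0 l (μ 0 a (μ 1 b c)) +
        (μ 0 l (μ 1 (μ 0 a b) c) - μ 0 l (μ 1 a (μ 0 b c))) =
      μ 0 l (μ 0 (μ 1 b a) c) - μ 0 l (μ 0 b (μ 1 a c)) +
        (μ 0 l (μ 1 (μ 0 b a) c) - μ 0 l (μ 1 b (μ 0 a c))) := by
    intro l a b c
    have e := congrArg (fun t => μ 0 l t) (h1 a b c)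
    simp only [map_add, map_sub] at e
    linear_combination (norm := abel) e
  have h2 : ∀ a b c : A,
      μ 0 (μ 2 a b) c - μ 0 a (μ 2 b c) + (μ 1 (μ 1 a b) c - μ 1 a (μ 1 b c)) +
        (μ 2 (μ 0 a b) c - μ 2 a (μ 0 b c)) =
      μ 0 (μ 2 b a) c - μ 0 b (μ 2 a c) + (μ 1 (μ 1 b a) c - μ 1 b (μ 1 a c)) +
        (μ 2 (μ 0 b a) c - μ 2 b (μ 0 a c)) := by
    intro a b c
    have e := hpre 2 a b c
    norm_num [Finset.sum_range_succ] at e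
    linear_combination (norm := abel) e
  refine ⟨fun x y => hcomm x y, fun x y z => hassoc x y z,
    fun x y => by show μ 1 x y - μ 1 y x = -(μ 1 y x - μ 1 x y); abel, ?_, ?_⟩
  · intro x y z
    show μ 1 x (μ 1 y z - μ 1 z y) - μ 1 (μ 1 y z - μ 1 z y) x +
        (μ 1 y (μ 1 z x - μ 1 x z) - μ 1 (μ 1 z x - μ 1 x z) y) +
        (μ 1 z (μ 1 x y - μ 1 y x) - μ 1 (μ 1 x y - μ 1 y x) z) = 0
    simp only [map_sub, LinearMap.sub_apply]
    linear_combination (norm := abel) -(h2 x y z) - (h2 y z x) - (h2 z x y) + (hcomm (μ 2 x y) z) - (hcomm (μ 2 x z) y) - (hcomm (μ 2 y x) z) + (hcomm (μ 2 y z) x) + (hcomm (μ 2 z x) y) - (hcomm (μ 2 z y) x) + (congrArg (fun t => μ 2 x t) (hcomm z y)) - (congrArg (fun t => μ 2 y t) (hcomm z x)) + (congrArg (fun t => μ 2 z t) (hcomm y x)) - (congrArg (fun t => μ 2 t z) (hcomm y x)) + (congrArg (fun t => μ 2 t y) (hcomm z x)) - (congrArg (fun t => μ 2 t x) (hcomm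 z y))
  · intro x y z w
    simp only [P, map_add, map_sub, LinearMap.add_apply, LinearMap.sub_apply]
    linear_combination (norm := abel) (h1 x z (μ 0 y w)) + (h1m z x w y) - (h1 x (μ 0 z w) y) + (h1m x y z w) + (h1 z (μ 0 x y) w) + (congrArg (fun t => μ 0 x t) (congrArg (fun t => μ 1 t w) (hcomm z y))) + (congrArg (fun t => μ 0 y t) (hcomm (μ 1 x z) w)) + (hswap y w (μ 1 x z)) - (congrArg (fun t => μ 0 y t) (hcomm (μ 1 z x) w)) - (hswap y w (μ 1 z x)) - (congrArg (fun t => μ 0 y t) (congrArg (fun t => μ 1 x t) (hcomm z w))) + (congrArg (fun t => μ 0 y t) (congrArg (fun t => μ 1 t x) (hcomm z w))) - (hswap z w (μ 1 x y)) + (hswap z x (μ 1 w y)) + (congrArg (fun t => μ 0 z t) (hcomm (μ 1 w x) y)) + (hswap z y (μ 1 w x)) - (congrArg (fun t => μ 0 z t) (hcomm (μ 1 x w) y)) - (hswap z y (μ 1 x w)) - (congrArg (fun t => μ 0 z t) (congrArg (fun t => μ 1 x t) (hcomm y w))) - (congrArg (fun t => μ 0 z t) (congrArg (fun t => μ 1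 t y) (hcomm x w))) - (hassoc x y (μ 1 z w)) + (congrArg (fun t => μ 0 t (μ 1 x y)) (hcomm z w)) + (hassoc w z (μ 1 x y)) - (congrArg (fun t => μ 0 (μ 1 x z) t) (hcomm y w)) - (hswap (μ 1 x z) w y) - (congrArg (fun t => μ 0 w t) (hcomm (μ 1 x z) y)) + (congrArg (fun t => μ 0 t y) (congrArg (fun t => μ 1 x t) (hcomm z w))) + (hcomm (μ 1 x (μ 0 w z)) y) + (congrArg (fun t => μ 0 (μ 1 z x) t) (hcomm y w)) + (hswap (μ 1 z x) w y) + (congrArg (fun t => μ 0 w t) (hcomm (μ 1 z x) y)) - (congrArg (fun t => μ 0 t y) (congrArg (fun t => μ 1 t x) (hcomm z w))) - (hcomm (μ 1 (μ 0 w z) x) y) + (congrArg (fun t => μ 1 x t) (congrArg (fun t => μ 0 z t) (hcomm y w))) + (congrArg (fun t => μ 1 x t) (hswap z w y)) + (congrArg (fun t => μ 1 x t) (congrArg (fun t => μ 0 w t) (hcomm z y))) - (congrArg (fun t => μ 1 x t) (congrArg (fun t => μ 0 t y) (hcomm z w))) - (congrArg (fun t => μ 1 x t) (hassoc w z y)) -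 (congrArg (fun t => μ 1 x t) (congrArg (fun t => μ 0 w t) (hcomm z y))) - (congrArg (fun t => μ 1 z t) (congrArg (fun t => μ 0 x t) (hcomm y w))) - (congrArg (fun t => μ 1 z t) (hswap x w y)) + (congrArg (fun t => μ 1 z t) (hassoc x y w)) + (congrArg (fun t => μ 1 z t) (congrArg (fun t => μ 0 x t) (hcomm y w))) + (congrArg (fun t => μ 1 z t) (hswap x w y)) - (congrArg (fun t => μ 1 (μ 0 x z) t) (hcomm y w)) + (congrArg (fun t => μ 1 t y) (congrArg (fun t => μ 0 x t) (hcomm z w))) + (congrArg (fun t => μ 1 t y) (hswap x w z)) + (congrArg (fun t => μ 1 t (μ 0 y w)) (hcomm z x)) + (congrArg (fun t => μ 1 (μ 0 x z) t) (hcomm y w)) - (congrArg (fun t => μ 1 t w) (hswap z x y)) - (congrArg (fun t => μ 1 t w) (congrArg (fun t => μ 0 x t) (hcomm z y))) + (congrArg (fun t => μ 1 t w) (hassoc x y z)) - (congrArg (fun t => μ 1 t y) (congrArg (fun t => μ 0 t x) (hcomm z w))) - (congrArg (fun t => μ 1 t y) (hassoc w z x)) - (congrArg (fun t => μ 1 t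 y) (congrArg (fun t => μ 0 w t) (hcomm z x)))
end

section
/- Let $(A,\diamond,\ast)$ be a pre-F-manifold algebra. Then $(A,\cdot,[-,-])$ with $x\cdot y = x\diamond y + y\diamond x$ and $[x,y] = x\ast y - y\ast x$ is an F-manifold algebra. -/
open FMan

/-- The sub-adjacent structure of a pre-F-manifold algebra is an F-manifold algebra. -/
theorem preFManifold_to_FManifold
    {K A : Type*} [Field K] [CharZero K] [AddCommGroup A] [Module K A]
    (d s : A →ₗ[K] A →ₗ[K] A)
    (h : IsPreFManifold (fun x y => d x y) (fun x y => s x y)) :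
    IsFManifold (fun x y => d x y + d y x) (fun x y => s x y - s y x) := by
  obtain ⟨h1, h2, h3, h4⟩ := h
  refine ⟨?_, ?_, ?_, ?_, ?_⟩
  · intro x y; abel
  · intro x y z
    simp only [map_add, LinearMap.add_apply]
    linear_combination (norm := abel) h1 z x y + h1 z y x - h1 x y z - h1 x z y
  · intro x y; exact (neg_sub _ _).symm
  · intro x y z
    simp only [map_sub, LinearMap.sub_apply]
    linear_combination (norm := abel) (- h2 x y z - h2 y z x - h2 z x y)
  · intro x y z w
    have e3a := h3 x y z w
    have e3b := h3 x y w z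
    have e4a := h4 y z w x
    have e4b := h4 x z w y
    simp only [F1, F2, map_add, map_sub, LinearMap.add_apply, LinearMap.sub_apply]
      at e3a e3b e4a e4b
    simp only [P, F1, F2, map_add, map_sub, LinearMap.add_apply, LinearMap.sub_apply]
    linear_combination (norm := abel) e3a + e3b - e4a - e4b
end

section
/- Let $(A,\cdot_A,[-,-]_A)$ be an F-manifold algebra and $(V;\rho,\mu)$ a representation of $A$. Then the semidirect product $A\oplus V$, with product $(x_1+v_1)\cdot(x_2+v_2) = x_1\cdot_A x_2 + \mu(x_1)v_2 + \mu(x_2)v_1$ and bracket $[x_1+v_1, x_2+v_2] = [x_1,x_2]_A + \rho(x_1)v_2 - \rho(x_2)v_1$, is an F-manifold algebra. -/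
open FMan

/-- The semidirect product of an F-manifold algebra with a representation is an
F-manifold algebra. -/
theorem semidirectProduct_FManifold
    {K A V : Type*} [Field K] [CharZero K]
    [AddCommGroup A] [Module K A] [AddCommGroup V] [Module K V]
    (mA brA : A →ₗ[K] A →ₗ[K] A) (ρ μ : A →ₗ[K] V →ₗ[K] V)
    (hA : IsFManifold (fun x y => mA x y) (fun x y => brA x y))
    (hρ : ∀ (x y : A) (v : V), ρ (brA x y) v = ρ x (ρ y v) - ρ y (ρ x v))
    (hμ : ∀ (x y : A) (v : V), μ (mA x y) v = μ x (μ y v))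
    (hR : ∀ (x y z : A) (v : V),
      (let R : A → A → V → V := fun a b u => ρ a (μ b u) - μ b (ρ a u) - μ (brA a b) u
       R (mA x y) z v) =
      (let R : A → A → V → V := fun a b u => ρ a (μ b u) - μ b (ρ a u) - μ (brA a b) u
       μ x (R y z v) + μ y (R x z v)))
    (hS : ∀ (x y z : A) (v : V),
      μ (P (fun a b => mA a b) (fun a b => brA a b) x y z) v =
      (let S : A → A → V → V := fun a b u => μ a (ρ b u) + μ b (ρ a u) - ρ (mA a b) u
       S y z (μ x v) - μ x (S y z v))) :
    IsFManifold (A := A × V)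
      (fun p q => (mA p.1 q.1, μ p.1 q.2 + μ q.1 p.2))
      (fun p q => (brA p.1 q.1, ρ p.1 q.2 - ρ q.1 p.2)) := by
  obtain ⟨hc, ha, hanti, hjac, hHM⟩ := hA
  refine ⟨?_, ?_, ?_, ?_, ?_⟩
  · intro x y
    exact Prod.ext (hc x.1 y.1) (add_comm _ _)
  · intro x y z
    refine Prod.ext (ha x.1 y.1 z.1) ?_
    have hcA : ∀ a b : A, mA a b = mA b a := fun a b => by simpa using hc a b
    have e1 := hμ x.1 y.1 z.2
    have e2 : μ z.1 (μ y.1 x.2) = μ (mA y.1 z.1) x.2 := by rw [← hμ, hcA z.1 y.1]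
    have e3 : μ z.1 (μ x.1 y.2) = μ x.1 (μ z.1 y.2) := by rw [← hμ, ← hμ, hcA z.1 x.1]
    simp only [map_add, map_sub]
    linear_combination (norm := abel) e1 + e2 + e3
  · intro x y
    exact Prod.ext (hanti x.1 y.1) (neg_sub _ _).symm
  · intro x y z
    refine Prod.ext ?_ ?_
    · exact hjac x.1 y.1 z.1
    · simp only [Prod.snd_add, Prod.snd_zero, map_add, map_sub, hρ]
      abel
  · intro x y z w
    refine Prod.ext ?_ ?_
    · exact hHM x.1 y.1 z.1 w.1
    · have e1 := hR x.1 y.1 z.1 w.2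
      have e2 := hR x.1 y.1 w.1 z.2
      have e3 := hS x.1 z.1 w.1 y.2
      have e4 := hS y.1 z.1 w.1 x.2
      simp only [P, map_add, map_sub] at e1 e2 e3 e4
      simp only [P, Prod.fst_sub, Prod.snd_sub, Prod.snd_add, LinearMap.sub_apply,
        map_add, map_sub]
      linear_combination (norm :=
        (simp only [LinearMap.sub_apply, LinearMap.add_apply, LinearMap.smul_apply,
          LinearMap.neg_apply]; abel)) e1 + e2 - e3 - e4
end

section
/- Let $(A,\cdot_A,[-,-]_A)$ be an F-manifold algebra admitting a nondegenerate symmetric bilinear form $\mathfrak{B}$ invariant in the sense that $\mathfrak{B}(x\cdot_A y, z) = \mathfrak{B}(x, y\cdot_A z)$ and $\mathfrak{B}([x,y]_A, z) = \mathfrak{B}(x,[y,z]_A)$ for all $x,y,z$. Then $A$ is a coherence F-manifold algebra, i.e., $P_{x\cdot_A y}(z,w) = P_y(z, x\cdot_A w) + P_x(z, y\cdot_A w)$ and $P_x(y,z)\cdot_A w = x\cdot_A Q(y,z,w) - Q(y,z,x\cdot_A w)$ hold, where $Q(x,y,z) = [x\cdot_A y, z]_A + [y\cdot_A z, x]_A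 + [z\cdot_A x, y]_A$. -/
open FMan

theorem aux_coherence {K A : Type*} [Field K] [AddCommGroup A] [Module K A]
    (mA brA : A →ₗ[K] A →ₗ[K] A)
    (hcomm : ∀ x y : A, mA x y = mA y x)
    (hskew : ∀ x y : A, brA x y = - brA y x)
    (hHM : ∀ x y z w : A,
      P (fun a b => mA a b) (fun a b => brA a b) (mA x y) z w =
        mA x (P (fun a b => mA a b) (fun a b => brA a b) y z w) +
        mA y (P (fun a b => mA a b) (fun a b => brA a b) x z w))
    (B : A →ₗ[K] A →ₗ[K] K)
    (hsymm : ∀ x y : A, B x y = B y x)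
    (hnondeg : ∀ x : A, (∀ y : A, B x y = 0) → x = 0)
    (hinv₁ : ∀ x y z : A, B (mA x y) z = B x (mA y z))
    (hinv₂ : ∀ x y z : A, B (brA x y) z = B x (brA y z)) :
    (∀ x y z w : A,
      P (fun a b => mA a b) (fun a b => brA a b) (mA x y) z w =
        P (fun a b => mA a b) (fun a b => brA a b) y z (mA x w) +
        P (fun a b => mA a b) (fun a b => brA a b) x z (mA y w)) ∧
    (∀ x y z w : A,
      mA (P (fun a b => mA a b) (fun a b => brA a b) x y z) w =
        mA x (brA (mA y z) w + brA (mA z w) y + brA (mA w y) z) -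
          (brA (mA y z) (mA x w) + brA (mA z (mA x w)) y + brA (mA (mA x w) y) z)) := by
  set Pm : A → A → A → A := P (fun a b => mA a b) (fun a b => brA a b) with hPm
  have hext : ∀ a b : A, (∀ t : A, B a t = B b t) → a = b := by
    intro a b h
    have h0 : ∀ t, B (a - b) t = 0 := by
      intro t; simp [map_sub, LinearMap.sub_apply, h t]
    exact sub_eq_zero.mp (hnondeg _ h0)
  have hm : ∀ u v c : A, B (mA u v) c = B v (mA u c) := by
    intro u v c; rw [hcomm, hinv₁]
  have hb : ∀ u v c : A, B (brA u v) c = - B v (brA u c) := by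
    intro u v c; rw [hskew, map_neg, LinearMap.neg_apply, hinv₂]
  have hmw : ∀ u x w : A, B w (mA x u) = B (mA x w) u := by
    intro u x w; rw [hsymm, hm, hsymm]
  have hPmdef : ∀ x y z : A, Pm x y z = brA x (mA y z) - mA (brA x y) z - mA y (brA x z) := by
    intro x y z; simp [hPm, P]
  have padj : ∀ x y z w : A, B (Pm x y z) w = B z (Pm x y w) := by
    intro x y z w
    rw [hPmdef, hPmdef]
    simp only [map_sub, LinearMap.sub_apply]
    rw [hb x (mA y z) w, hm y z (brA x w), hm (brA x y) z w, hm y (brA x z) w,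
      hb x z (mA y w)]
    ring
  have psymm : ∀ x y z : A, Pm x y z = Pm x z y := by
    intro x y z
    rw [hPmdef, hPmdef, hcomm y z, hcomm y (brA x z), hcomm (brA x y) z]
    abel
  have g1 : ∀ x y z w : A, Pm (mA x y) z w = Pm y z (mA x w) + Pm x z (mA y w) := by
    intro x y z w
    apply hext
    intro t
    calc B (Pm (mA x y) z w) t
        = B w (Pm (mA x y) z t) := padj _ _ _ _
      _ = B w (mA x (Pm y z t) + mA y (Pm x z t)) := by rw [hHM]
      _ = B w (mA x (Pm y z t)) + B w (mA y (Pm x z t)) := by rw [map_add]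
      _ = B (Pm y z (mA x w)) t + B (Pm x z (mA y w)) t := by
          rw [padj y z (mA x w) t, padj x z (mA y w) t, hmw, hmw]
      _ = B (Pm y z (mA x w) + Pm x z (mA y w)) t := by
          rw [map_add, LinearMap.add_apply]
  have qadj : ∀ y z w t : A,
      B (brA (mA y z) w + brA (mA z w) y + brA (mA w y) z) t = B z (Pm t w y) := by
    intro y z w t
    rw [hPmdef]
    simp only [map_add, map_sub, LinearMap.add_apply]
    rw [hinv₂ (mA y z) w t, hm y z (brA w t), hinv₂ (mA z w) y t, hcomm z w,
      hm w z (brA y t), hb (mA w y) z t]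
    rw [hskew w t, hskew y t, hskew (mA w y) t]
    simp only [map_neg, LinearMap.neg_apply]
    rw [hcomm y (brA t w)]
    ring
  refine ⟨g1, ?_⟩
  intro x y z w
  apply hext
  intro t
  have key : Pm (mA x t) w y - Pm t (mA x w) y = Pm x y (mA w t) := by
    rw [psymm (mA x t) w y, g1 x t y w, psymm t (mA x w) y, hcomm t w]
    abel
  calc B (mA (Pm x y z) w) t
      = B (Pm x y z) (mA w t) := hinv₁ _ _ _
    _ = B z (Pm x y (mA w t)) := padj _ _ _ _
    _ = B z (Pm (mA x t) w y - Pm t (mA x w) y) := by rw [key]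
    _ = B z (Pm (mA x t) w y) - B z (Pm t (mA x w) y) := by rw [map_sub]
    _ = B (mA x (brA (mA y z) w + brA (mA z w) y + brA (mA w y) z)) t -
          B (brA (mA y z) (mA x w) + brA (mA z (mA x w)) y + brA (mA (mA x w) y) z) t := by
        rw [qadj y z (mA x w) t, hm x (brA (mA y z) w + brA (mA z w) y + brA (mA w y) z) t,
          qadj y z w (mA x t)]
    _ = B (mA x (brA (mA y z) w + brA (mA z w) y + brA (mA w y) z) -
          (brA (mA y z) (mA x w) + brA (mA z (mA x w)) y + brA (mA (mA x w) y) z)) t := by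
        rw [map_sub, LinearMap.sub_apply]


/-- An F-manifold algebra with an invariant nondegenerate symmetric bilinear form is a
coherence F-manifold algebra. -/
theorem invariant_form_gives_coherence
    {K A : Type*} [Field K] [CharZero K] [IsAlgClosed K]
    [AddCommGroup A] [Module K A] [FiniteDimensional K A]
    (mA brA : A →ₗ[K] A →ₗ[K] A)
    (hA : IsFManifold (fun x y => mA x y) (fun x y => brA x y))
    (B : A →ₗ[K] A →ₗ[K] K)
    (hsymm : ∀ x y : A, B x y = B y x)
    (hnondeg : ∀ x : A, (∀ y : A, B x y = 0) → x = 0)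
    (hinv₁ : ∀ x y z : A, B (mA x y) z = B x (mA y z))
    (hinv₂ : ∀ x y z : A, B (brA x y) z = B x (brA y z)) :
    (∀ x y z w : A,
      P (fun a b => mA a b) (fun a b => brA a b) (mA x y) z w =
        P (fun a b => mA a b) (fun a b => brA a b) y z (mA x w) +
        P (fun a b => mA a b) (fun a b => brA a b) x z (mA y w)) ∧
    (∀ x y z w : A,
      (let Q : A → A → A → A := fun a b c =>
        brA (mA a b) c + brA (mA b c) a + brA (mA c a) b
       mA (P (fun a b => mA a b) (fun a b => brA a b) x y z) w) =
      (let Q : A → A → A → A := fun a b c =>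
        brA (mA a b) c + brA (mA b c) a + brA (mA c a) b
       mA x (Q y z w) - Q y z (mA x w))) := by
  obtain ⟨hcomm, hassoc, hskew, hjac, hHM⟩ := hA
  have H := aux_coherence mA brA hcomm hskew hHM B hsymm hnondeg hinv₁ hinv₂
  exact ⟨H.1, fun x y z w => H.2 x y z w⟩
end

section
/- Let $T:V\to A$ be an O-operator on an F-manifold algebra $(A,\cdot_A,[-,-]_A)$ with respect to a representation $(V;\rho,\mu)$. Define $u\diamond v = \mu(T(u))v$ and $u\ast v = \rho(T(u))v$ on $V$. Then $(V,\diamond,\ast)$ is a pre-F-manifold algebra, and $T$ is a homomorphism from the sub-adjacent F-manifold algebra $V^c$ (with $u\cdot v = u\diamond v + v\diamond u$, $[u,v] = u\ast v - v\ast u$) to $(A,\cdot_A,[-,-]_A)$. -/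
open FMan

/-- An O-operator `T : V → A` on an F-manifold algebra with respect to a
representation `(V; ρ, μ)` induces a pre-F-manifold algebra structure on `V`,
and `T` is a homomorphism from the sub-adjacent F-manifold algebra to `A`. -/
theorem Ooperator_gives_preFManifold
    {K A V : Type*} [Field K] [CharZero K]
    [AddCommGroup A] [Module K A] [AddCommGroup V] [Module K V]
    (mA brA : A →ₗ[K] A →ₗ[K] A) (ρ μ : A →ₗ[K] V →ₗ[K] V)
    (hA : IsFManifold (fun x y => mA x y) (fun x y => brA x y))
    (hρ : ∀ (x y : A) (v : V), ρ (brA x y) v = ρ x (ρ y v) - ρ y (ρ x v))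
    (hμ : ∀ (x y : A) (v : V), μ (mA x y) v = μ x (μ y v))
    (hR : ∀ (x y z : A) (v : V),
      (let R : A → A → V → V := fun a b u => ρ a (μ b u) - μ b (ρ a u) - μ (brA a b) u
       R (mA x y) z v) =
      (let R : A → A → V → V := fun a b u => ρ a (μ b u) - μ b (ρ a u) - μ (brA a b) u
       μ x (R y z v) + μ y (R x z v)))
    (hS : ∀ (x y z : A) (v : V),
      μ (P (fun a b => mA a b) (fun a b => brA a b) x y z) v =
      (let S : A → A → V → V := fun a b u => μ a (ρ b u) + μ b (ρ a u) - ρ (mA a b) u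
       S y z (μ x v) - μ x (S y z v)))
    (T : V →ₗ[K] A)
    (hT₁ : ∀ u v : V, mA (T u) (T v) = T (μ (T u) v + μ (T v) u))
    (hT₂ : ∀ u v : V, brA (T u) (T v) = T (ρ (T u) v - ρ (T v) u)) :
    IsPreFManifold (A := V) (fun u v => μ (T u) v) (fun u v => ρ (T u) v) ∧
    (∀ u v : V, T (μ (T u) v + μ (T v) u) = mA (T u) (T v)) ∧
    (∀ u v : V, T (ρ (T u) v - ρ (T v) u) = brA (T u) (T v)) := by
  have key1 : ∀ u v : V, T (μ (T u) v + μ (T v) u) = mA (T u) (T v) :=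
    fun u v => (hT₁ u v).symm
  have key2 : ∀ u v : V, T (ρ (T u) v - ρ (T v) u) = brA (T u) (T v) :=
    fun u v => (hT₂ u v).symm
  have hF1 : ∀ x z w : V, F1 (fun u v => μ (T u) v) (fun u v => ρ (T u) v) x z w
      = ρ (T x) (μ (T z) w) - μ (T z) (ρ (T x) w) - μ (brA (T x) (T z)) w := by
    intro x z w
    simp only [F1]
    rw [key2]
  have hF2 : ∀ y z x : V, F2 (fun u v => μ (T u) v) (fun u v => ρ (T u) v) y z x
      = μ (T y) (ρ (T z) x) + μ (T z) (ρ (T y) x) - ρ (mA (T y) (T z)) x := by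
    intro y z x
    simp only [F2]
    rw [key1]
  have key3 : ∀ x y z : V,
      T ((ρ (T x) (μ (T y) z) - μ (T y) (ρ (T x) z) - μ (brA (T x) (T y)) z)
        + (ρ (T x) (μ (T z) y) - μ (T z) (ρ (T x) y) - μ (brA (T x) (T z)) y)
        + (μ (T y) (ρ (T z) x) + μ (T z) (ρ (T y) x) - ρ (mA (T y) (T z)) x))
      = P (fun a b => mA a b) (fun a b => brA a b) (T x) (T y) (T z) := by
    intro x y z
    have e1 : brA (T x) (mA (T y) (T z))
        = T (ρ (T x) (μ (T y) z + μ (T z) y) - ρ (mA (T y) (T z)) x) := by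
      rw [hT₁ y z]; exact hT₂ _ _
    have e2 : mA (brA (T x) (T y)) (T z)
        = T (μ (brA (T x) (T y)) z + μ (T z) (ρ (T x) y - ρ (T y) x)) := by
      rw [hT₂ x y]; exact hT₁ _ _
    have e3 : mA (T y) (brA (T x) (T z))
        = T (μ (T y) (ρ (T x) z - ρ (T z) x) + μ (brA (T x) (T z)) y) := by
      rw [hT₂ x z]; exact hT₁ _ _
    simp only [P]
    rw [e1, e2, e3, ← map_sub, ← map_sub]
    congr 1
    simp only [map_add, map_sub]
    abel
  refine ⟨⟨?_, ?_, ?_, ?_⟩, key1, key2⟩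
  · intro x y z
    have h := hμ (T x) (T y) z
    rw [hT₁ x y] at h
    simp only [map_add, LinearMap.add_apply] at h
    simp only []
    rw [← h]
    abel
  · intro x y z
    have h := hρ (T x) (T y) z
    rw [hT₂ x y] at h
    simp only [map_sub, LinearMap.sub_apply] at h
    simp only []
    rw [sub_eq_sub_iff_sub_eq_sub]
    exact h
  · intro x y z w
    have h := hR (T x) (T y) (T z) w
    dsimp only at h
    simp only []
    rw [hF1, hF1, hF1, key1]
    exact h
  · intro x y z w
    have h := hS (T x) (T y) (T z) w
    dsimp only at h
    simp only []
    rw [hF1, hF1, hF2, hF2, hF2, key3]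
    exact h
end

section
/- Let $(A,\cdot_A,[-,-]_A)$ be an F-manifold algebra and $\mathcal{B}:A\to A$ a Rota-Baxter operator (of weight zero) on $A$, i.e. $\mathcal{B}(x)\cdot_A\mathcal{B}(y) = \mathcal{B}(\mathcal{B}(x)\cdot_A y + x\cdot_A\mathcal{B}(y))$ and $[\mathcal{B}(x),\mathcal{B}(y)]_A = \mathcal{B}([\mathcal{B}(x),y]_A + [x,\mathcal{B}(y)]_A)$. Then $x\diamond y = \mathcal{B}(x)\cdot_A y$ and $x\ast y = [\mathcal{B}(x), y]_A$ define a pre-F-manifold algebra structure on $A$. -/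
open FMan

/-- A Rota-Baxter operator (of weight zero) on an F-manifold algebra induces a
pre-F-manifold algebra structure via `x ⋄ y = B(x)·y` and `x ∗ y = [B(x), y]`. -/
theorem rotaBaxter_gives_preFManifold
    {K A : Type*} [Field K] [CharZero K] [AddCommGroup A] [Module K A]
    (mA brA : A →ₗ[K] A →ₗ[K] A)
    (hA : IsFManifold (fun x y => mA x y) (fun x y => brA x y))
    (B : A →ₗ[K] A)
    (hB₁ : ∀ x y : A, mA (B x) (B y) = B (mA (B x) y + mA x (B y)))
    (hB₂ : ∀ x y : A, brA (B x) (B y) = B (brA (B x) y + brA x (B y))) :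
    IsPreFManifold (fun x y => mA (B x) y) (fun x y => brA (B x) y) := by
  have hc : ∀ a b : A, mA a b = mA b a := hA.1
  have ha : ∀ a b c : A, mA (mA a b) c = mA a (mA b c) := hA.2.1
  have hskew : ∀ a b : A, brA a b = - brA b a := hA.2.2.1
  have hjac : ∀ a b c : A, brA a (brA b c) + brA b (brA c a) + brA c (brA a b) = 0 :=
    hA.2.2.2.1
  have hHM : ∀ a b c d : A,
      brA (mA a b) (mA c d) - mA (brA (mA a b) c) d - mA c (brA (mA a b) d)
        = mA a (brA b (mA c d)) - mA a (mA (brA b c) d) - mA a (mA c (brA b d))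
          + (mA b (brA a (mA c d)) - mA b (mA (brA a c) d) - mA b (mA c (brA a d))) := by
    intro a b c d
    have h := hA.2.2.2.2 a b c d
    simp only [P, map_sub] at h
    linear_combination (norm := abel) h
  have keyF1 : ∀ a b c : A, F1 (fun x y => mA (B x) y) (fun x y => brA (B x) y) a b c
      = brA (B a) (mA (B b) c) - mA (brA (B a) (B b)) c - mA (B b) (brA (B a) c) := by
    intro a b c
    show brA (B a) (mA (B b) c) - mA (B b) (brA (B a) c)
        - mA (B (brA (B a) b - brA (B b) a)) c = _
    rw [hskew (B b) a, sub_neg_eq_add, ← hB₂ a b]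
    abel
  have keyF2 : ∀ a b c : A, F2 (fun x y => mA (B x) y) (fun x y => brA (B x) y) a b c
      = mA (B a) (brA (B b) c) + mA (B b) (brA (B a) c) - brA (mA (B a) (B b)) c := by
    intro a b c
    show mA (B a) (brA (B b) c) + mA (B b) (brA (B a) c)
        - brA (B (mA (B a) b + mA (B b) a)) c = _
    rw [hc (B b) a, ← hB₁ a b]
  refine ⟨?_, ?_, ?_, ?_⟩
  · -- Zinbiel
    intro x y z
    show mA (B x) (mA (B y) z) = mA (B (mA (B y) x)) z + mA (B (mA (B x) y)) z
    have e1 : mA (B (mA (B x) y + mA x (B y))) z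
        = mA (B (mA (B x) y)) z + mA (B (mA x (B y))) z := by
      rw [map_add, map_add, LinearMap.add_apply]
    have e2 : mA (mA (B x) (B y)) z = mA (B (mA (B x) y + mA x (B y))) z := by rw [hB₁]
    have e3 : mA (B (mA x (B y))) z = mA (B (mA (B y) x)) z := by rw [hc x (B y)]
    linear_combination (norm := abel) e2 + e1 + e3 - ha (B x) (B y) z
  · -- pre-Lie
    intro x y z
    show brA (B (brA (B x) y)) z - brA (B x) (brA (B y) z)
        = brA (B (brA (B y) x)) z - brA (B y) (brA (B x) z)
    have f1 : brA (brA (B x) (B y)) z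
        = brA (B (brA (B x) y)) z + brA (B (brA x (B y))) z := by
      rw [hB₂ x y, map_add, map_add, LinearMap.add_apply]
    have f2 : brA (B (brA x (B y))) z = - brA (B (brA (B y) x)) z := by
      rw [hskew x (B y), map_neg, map_neg, LinearMap.neg_apply]
    have f3 := hjac (B x) (B y) z
    have f4 : brA (B y) (brA z (B x)) = - brA (B y) (brA (B x) z) := by
      rw [hskew z (B x), map_neg]
    have f5 := hskew z (brA (B x) (B y))
    linear_combination (norm := abel) -f1 - f2 - f3 + f4 + f5
  · -- F1 compatibility
    intro x y z w
    show F1 (fun x y => mA (B x) y) (fun x y => brA (B x) y) (mA (B x) y + mA (B y) x) z w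
        = mA (B x) (F1 (fun x y => mA (B x) y) (fun x y => brA (B x) y) y z w)
          + mA (B y) (F1 (fun x y => mA (B x) y) (fun x y => brA (B x) y) x z w)
    have hu : B (mA (B x) y + mA (B y) x) = mA (B x) (B y) := by
      rw [hc (B y) x, ← hB₁ x y]
    rw [keyF1 (mA (B x) y + mA (B y) x) z w, keyF1 y z w, keyF1 x z w, hu]
    simp only [map_sub]
    linear_combination (norm := abel) hHM (B x) (B y) (B z) w
  · -- F2 compatibility
    intro x y z w
    show mA (B (F1 (fun x y => mA (B x) y) (fun x y => brA (B x) y) x y z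
          + F1 (fun x y => mA (B x) y) (fun x y => brA (B x) y) x z y
          + F2 (fun x y => mA (B x) y) (fun x y => brA (B x) y) y z x)) w
        = F2 (fun x y => mA (B x) y) (fun x y => brA (B x) y) y z (mA (B x) w)
          - mA (B x) (F2 (fun x y => mA (B x) y) (fun x y => brA (B x) y) y z w)
    have g1 : brA (B x) (mA (B y) (B z))
        = B (brA (B x) (mA (B y) z)) + B (brA (B x) (mA y (B z)))
          + B (brA x (mA (B y) (B z))) := by
      rw [hB₁ y z, hB₂ x (mA (B y) z + mA y (B z)), ← hB₁ y z]
      simp only [map_add]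
    have g2 : mA (brA (B x) (B y)) (B z)
        = B (mA (brA (B x) (B y)) z) + B (mA (brA (B x) y) (B z))
          + B (mA (brA x (B y)) (B z)) := by
      rw [hB₂ x y, hB₁ (brA (B x) y + brA x (B y)) z, ← hB₂ x y]
      simp only [map_add, LinearMap.add_apply]
      abel
    have g3 : mA (B y) (brA (B x) (B z))
        = B (mA (B y) (brA (B x) z)) + B (mA (B y) (brA x (B z)))
          + B (mA y (brA (B x) (B z))) := by
      rw [hB₂ x z, hB₁ y (brA (B x) z + brA x (B z)), ← hB₂ x z]
      simp only [map_add]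
    have c1 : B (brA (B x) (mA (B z) y)) = B (brA (B x) (mA y (B z))) := by
      rw [hc (B z) y]
    have c2 : B (mA (brA (B x) (B z)) y) = B (mA y (brA (B x) (B z))) := by
      rw [hc (brA (B x) (B z)) y]
    have c3 : B (mA (B z) (brA (B x) y)) = B (mA (brA (B x) y) (B z)) := by
      rw [hc (B z) (brA (B x) y)]
    have c4 : B (mA (B y) (brA (B z) x)) = - B (mA (B y) (brA x (B z))) := by
      rw [hskew (B z) x, map_neg, map_neg]
    have c5 : B (mA (B z) (brA (B y) x)) = - B (mA (brA x (B y)) (B z)) := by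
      rw [hskew (B y) x, map_neg, map_neg, hc (B z) (brA x (B y))]
    have c6 : B (brA (mA (B y) (B z)) x) = - B (brA x (mA (B y) (B z))) := by
      rw [hskew (mA (B y) (B z)) x, map_neg]
    have keyT : B (F1 (fun x y => mA (B x) y) (fun x y => brA (B x) y) x y z
          + F1 (fun x y => mA (B x) y) (fun x y => brA (B x) y) x z y
          + F2 (fun x y => mA (B x) y) (fun x y => brA (B x) y) y z x)
        = brA (B x) (mA (B y) (B z)) - mA (brA (B x) (B y)) (B z)
          - mA (B y) (brA (B x) (B z)) := by
      rw [keyF1 x y z, keyF1 x z y, keyF2 y z x]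
      simp only [map_add, map_sub]
      linear_combination (norm := abel) (-g1) + g2 + g3 + c1 - c2 - c3 + c4 + c5 - c6
    rw [keyT, keyF2 y z (mA (B x) w), keyF2 y z w]
    have q1 : mA (brA (B x) (mA (B y) (B z))) w = mA w (brA (B x) (mA (B y) (B z))) :=
      hc _ _
    have q2 : mA (mA (brA (B x) (B y)) (B z)) w = mA w (mA (brA (B x) (B y)) (B z)) :=
      hc _ _
    have q3 : mA (mA (B y) (brA (B x) (B z))) w = mA w (mA (B y) (brA (B x) (B z))) :=
      hc _ _
    have q4 : brA (mA (B y) (B z)) (mA (B x) w)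
        = - brA (mA (B x) w) (mA (B y) (B z)) := hskew _ _
    have q5 : mA (B z) (brA (B y) (mA (B x) w))
        = - mA (brA (mA (B x) w) (B y)) (B z) := by
      rw [hskew (B y) (mA (B x) w), map_neg, hc (B z) (brA (mA (B x) w) (B y))]
    have q6 : mA (B y) (brA (B z) (mA (B x) w))
        = - mA (B y) (brA (mA (B x) w) (B z)) := by
      rw [hskew (B z) (mA (B x) w), map_neg]
    have q7 : mA (B x) (brA (mA (B y) (B z)) w)
        = - mA (B x) (brA w (mA (B y) (B z))) := by
      rw [hskew (mA (B y) (B z)) w, map_neg]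
    have q8 : mA (B x) (mA (B z) (brA (B y) w))
        = - mA (B x) (mA (brA w (B y)) (B z)) := by
      rw [hskew (B y) w, map_neg, map_neg, hc (B z) (brA w (B y))]
    have q9 : mA (B x) (mA (B y) (brA (B z) w))
        = - mA (B x) (mA (B y) (brA w (B z))) := by
      rw [hskew (B z) w, map_neg, map_neg]
    have hm4 := hHM (B x) w (B y) (B z)
    simp only [map_sub, map_add, LinearMap.sub_apply, LinearMap.add_apply]
    linear_combination (norm := abel) q1 - q2 - q3 + q4 - q5 - q6 - q7 + q8 + q9 - hm4
end

section
/- Let $(A,\cdot)$ be a commutative associative algebra with a Rota-Baxter operator $\mathcal{B}$ (i.e. $\mathcal{B}(x)\cdot\mathcal{B}(y)=\mathcal{B}(\mathcal{B}(x)\cdot y + x\cdot\mathcal{B}(y))$) and a derivation $D$ with $\mathcal{B}\circ D = D\circ\mathcal{B}$. Then $\mathcal{B}$ is a Rota-Baxter operator on the Lie algebra $(A,[-,-])$ with $[x,y] = x\cdot D(y) - y\cdot D(x)$, i.e. $[\mathcal{B}(x),\mathcal{B}(y)] = \mathcal{B}([\mathcal{B}(x),y] + [x,\mathcal{B}(y)])$.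 -/
/-- A Rota-Baxter operator on a commutative associative algebra commuting with a
derivation `D` is a Rota-Baxter operator on the Lie algebra with bracket
`[x,y] = x·D(y) - y·D(x)`. -/
theorem rotaBaxter_commuting_with_derivation
    {K A : Type*} [Field K] [CharZero K] [AddCommGroup A] [Module K A]
    (m : A →ₗ[K] A →ₗ[K] A) (D B : A →ₗ[K] A)
    (hcomm : ∀ x y : A, m x y = m y x)
    (hassoc : ∀ x y z : A, m (m x y) z = m x (m y z))
    (hder : ∀ x y : A, D (m x y) = m (D x) y + m x (D y))
    (hB : ∀ x y : A, m (B x) (B y) = B (m (B x) y + m x (B y)))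
    (hBD : ∀ x : A, B (D x) = D (B x)) :
    ∀ x y : A,
      (let br : A → A → A := fun a b => m a (D b) - m b (D a)
       br (B x) (B y)) =
      (let br : A → A → A := fun a b => m a (D b) - m b (D a)
       B (br (B x) y + br x (B y))) := by
  intro x y
  simp only
  have h1 : m (B x) (D (B y)) = B (m (B x) (D y) + m x (D (B y))) := by
    rw [← hBD y, hB, hBD]
  have h2 : m (B y) (D (B x)) = B (m (B y) (D x) + m y (D (B x))) := by
    rw [← hBD x, hB, hBD]
  rw [h1, h2, ← map_sub]
  congr 1
  abel
end

section
/- Let $(A,\cdot_A,[-,-]_A)$ be an F-manifold algebra and $\alpha:A\to A$ an average operator on $A$, i.e. $\alpha(x)\cdot_A\alpha(y) = \alpha(\alpha(x)\cdot_A y)$ and $[\alpha(x),\alpha(y)]_A = \alpha([\alpha(x),y]_A)$. Then $x\bullet y = \alpha(x)\cdot_A y$ and $\{x,y\} = [\alpha(x), y]_A$ define a dual pre-F-manifold algebra structure on $A$. -/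
open FMan

/-- An average operator on an F-manifold algebra induces a dual pre-F-manifold
algebra structure via `x • y = α(x)·y` and `{x,y} = [α(x), y]`. -/
theorem averageOperator_gives_dualPreFManifold
    {K A : Type*} [Field K] [CharZero K] [AddCommGroup A] [Module K A]
    (mA brA : A →ₗ[K] A →ₗ[K] A)
    (hA : IsFManifold (fun x y => mA x y) (fun x y => brA x y))
    (α : A →ₗ[K] A)
    (hα₁ : ∀ x y : A, mA (α x) (α y) = α (mA (α x) y))
    (hα₂ : ∀ x y : A, brA (α x) (α y) = α (brA (α x) y)) :
    IsDualPreFManifold (fun x y => mA (α x) y) (fun x y => brA (α x) y) := by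
  obtain ⟨hc, ha, hs, hj, hhm⟩ := hA
  simp only at hc ha hs hj hhm
  -- α is equivariant for the Hertling–Manin operator
  have hP : ∀ y z w : A,
      α (P (fun x y => mA x y) (fun x y => brA x y) (α y) (α z) w)
        = P (fun x y => mA x y) (fun x y => brA x y) (α y) (α z) (α w) := by
    intro y z w
    simp only [P, map_sub]
    rw [← hα₂ y (mA (α z) w), ← hα₁ z w, hα₂ y z, ← hα₁ (brA (α y) z) w, ← hα₂ y z,
      ← hα₁ z (brA (α y) w), ← hα₂ y w]
  have hG1 : ∀ x y z : A,
      G1 (fun x y => mA (α x) y) (fun x y => brA (α x) y) x y z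
        = P (fun x y => mA x y) (fun x y => brA x y) (α x) (α y) z := by
    intro x y z
    simp only [G1, P]
    rw [hα₂ x y]
  have hG2 : ∀ x y z : A,
      G2 (fun x y => mA (α x) y) (fun x y => brA (α x) y) x y z
        = - P (fun x y => mA x y) (fun x y => brA x y) x (α y) (α z) := by
    intro x y z
    simp only [G2, P]
    rw [← hα₁ y z, hs (mA (α y) (α z)) x, hs (α y) x, hs (α z) x, map_neg, map_neg,
      hc (α z) (brA x (α y))]
    abel
  refine ⟨?_, ?_, ?_, ?_, ?_, ?_⟩
  · intro x y z
    show mA (α x) (mA (α y) z) = mA (α (mA (α x) y)) z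
    rw [← hα₁ x y, ha]
  · intro x y z
    show mA (α (mA (α x) y)) z = mA (α (mA (α y) x)) z
    rw [← hα₁ x y, ← hα₁ y x, hc (α x) (α y)]
  · intro x y z
    show brA (α x) (brA (α y) z)
        = brA (α (brA (α x) y)) z + brA (α y) (brA (α x) z)
    rw [← hα₂ x y]
    have j := hj (α x) (α y) z
    rw [hs z (α x), map_neg, hs z (brA (α x) (α y))] at j
    rw [← sub_eq_zero, ← j]
    abel
  · intro x y z w
    simp only [hG1]
    rw [← hα₁ x y]
    exact hhm (α x) (α y) (α z) w
  · intro x y z w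
    simp only [hG1, hG2]
    rw [hP y z w]
    have h := hhm (α y) x (α z) (α w)
    rw [h, map_neg, hc x (P (fun x y => mA x y) (fun x y => brA x y) (α y) (α z) (α w))]
    abel
  · intro x y z
    show mA (α (brA (α x) y)) z + mA (α (brA (α y) x)) z = 0
    rw [← hα₂ x y, ← hα₂ y x, hs (α y) (α x), map_neg, LinearMap.neg_apply, add_neg_cancel]
end
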